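/- Let α ∈ ℝ∖ℚ be of bounded type with constant M (q_{k+1} ≤ M q_k for all k, where q_k are the continued-fraction convergent denominators), let T x = x + 2πα on ℝ/2πℤ, let c₁ ∈ [0, π), c₂ = c₁ + π, β > 1, and set I_n = [c₁ − q_n^{−β}, c₁ + q_n^{−β}] ∪ [c₂ − q_n^{−β}, c₂ + q_n^{−β}], and (1/10)I_n the union of the same two intervals of radius 1/(10 q_n^β). Define min r_n = min_{x ∈ I_n} min{i > 0 : T^i x ∈ I_n} and max r_n = max_{x ∈ (1/10)I_n} min{i > 0 : T^i x ∈ (1/10)I_n}. Then M^{−20} ≤ (min r_n)/(max r_n) ≤ 1. -/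

import Mathlib

open Real

noncomputable section

/-- The denominator `q_n` of the `n`-th continued fraction convergent of `α`. -/
def cfDen (α : ℝ) (n : ℕ) : ℝ := (GenContFract.of α).dens n

/-- `α` is of bounded type with constant `M`: `q_{n+1} ≤ M q_n` for all `n`. -/
def BoundedType (α M : ℝ) : Prop := ∀ n : ℕ, cfDen α (n + 1) ≤ M * cfDen α n

/-- `x`, viewed as a point of the circle `ℝ/2πℤ`, lies in the set `S ⊆ ℝ`. -/
def InCircle (S : Set ℝ) (x : ℝ) : Prop := ∃ k : ℤ, x - 2 * π * k ∈ S

/-- The first return time of `x ∈ S` to `S` under the rotation `T x = x + 2πα`: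
`min {i > 0 : T^i x ∈ S}` (the `sInf` of that set of positive integers). -/
def returnTime (α : ℝ) (S : Set ℝ) (x : ℝ) : ℕ :=
  sInf {i : ℕ | 0 < i ∧ InCircle S (x + 2 * π * i * α)}

/-- The critical set `I_n`: the two intervals of radius `r` around `c₁` and `c₁ + π`. -/
def critSet (c₁ r : ℝ) : Set ℝ :=
  Set.Icc (c₁ - r) (c₁ + r) ∪ Set.Icc (c₁ + π - r) (c₁ + π + r)

/-- numerator -/
def cfNum (α : ℝ) (n : ℕ) : ℝ := (GenContFract.of α).nums n

namespace CFAux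

variable {α : ℝ}

lemma not_term (hα : Irrational α) (n : ℕ) : ¬(GenContFract.of α).TerminatedAt n := by
  intro h
  obtain ⟨q, hq⟩ := (GenContFract.terminates_iff_rat α).mp ⟨n, h⟩
  exact hα ⟨q, hq.symm⟩

lemma exists_s (hα : Irrational α) (n : ℕ) :
    ∃ gp, (GenContFract.of α).s.get? n = some gp := by
  have := not_term hα n
  exact Option.ne_none_iff_exists'.1 this

lemma q_zero : cfDen α 0 = 1 := rfl

lemma q_ge_one (hα : Irrational α) (n : ℕ) : 1 ≤ cfDen α n := by
  have h := GenContFract.succ_nth_fib_le_of_nth_den (v := α) (n := n)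
    (Or.inr (not_term hα (n-1)))
  have : (1:ℝ) ≤ (Nat.fib (n+1) : ℝ) := by
    have := Nat.fib_pos.mpr (Nat.succ_pos n)
    exact_mod_cast this
  exact le_trans this h

lemma q_pos (hα : Irrational α) (n : ℕ) : 0 < cfDen α n :=
  lt_of_lt_of_le zero_lt_one (q_ge_one hα n)

lemma q_mono (hα : Irrational α) (n : ℕ) : cfDen α n ≤ cfDen α (n+1) :=
  GenContFract.of_den_mono

/-- the joint recurrence with an integer partial quotient `b ≥ 1` -/
lemma rec2 (hα : Irrational α) (n : ℕ) :
    ∃ b : ℤ, (1:ℝ) ≤ b ∧ cfNum α (n+2) = b * cfNum α (n+1) + cfNum α n ∧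
      cfDen α (n+2) = b * cfDen α (n+1) + cfDen α n := by
  obtain ⟨gp, hs⟩ := exists_s hα (n+1)
  obtain ⟨ha, z, hb⟩ := GenContFract.of_partNum_eq_one_and_exists_int_partDen_eq hs
  have hb1 : (1:ℝ) ≤ gp.b :=
    GenContFract.of_one_le_get?_partDen (GenContFract.partDen_eq_s_b hs)
  refine ⟨z, by rw [← hb]; exact hb1, ?_, ?_⟩
  · have := GenContFract.nums_recurrence hs rfl rfl
    simp only [cfNum]; rw [this, ha, hb]; ring
  · have := GenContFract.dens_recurrence hs rfl rfl
    simp only [cfDen]; rw [this, ha, hb]; ring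

lemma q_sum (hα : Irrational α) (n : ℕ) :
    cfDen α (n+1) + cfDen α n ≤ cfDen α (n+2) := by
  obtain ⟨b, hb1, -, hq⟩ := rec2 hα n
  nlinarith [q_pos hα (n+1)]

lemma exists_int_pq (hα : Irrational α) (n : ℕ) :
    (∃ z : ℤ, cfNum α n = z) ∧ (∃ z : ℤ, cfDen α n = z) := by
  induction n using Nat.twoStepInduction with
  | zero =>
    constructor
    · exact ⟨⌊α⌋, by rw [show cfNum α 0 = (GenContFract.of α).h from rfl,
        GenContFract.of_h_eq_floor]⟩
    · exact ⟨1, by rw [q_zero]; norm_num⟩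
  | one =>
    obtain ⟨gp, hs⟩ := exists_s hα 0
    obtain ⟨ha, z, hb⟩ := GenContFract.of_partNum_eq_one_and_exists_int_partDen_eq hs
    constructor
    · refine ⟨z * ⌊α⌋ + 1, ?_⟩
      have := GenContFract.first_num_eq hs
      rw [show cfNum α 1 = (GenContFract.of α).nums 1 from rfl, this, ha, hb,
        GenContFract.of_h_eq_floor]
      push_cast; ring
    · refine ⟨z, ?_⟩
      have := GenContFract.first_den_eq hs
      rw [show cfDen α 1 = (GenContFract.of α).dens 1 from rfl, this, hb]
  | more n ih1 ih2 =>
    obtain ⟨b, hb1, hp, hq⟩ := rec2 hα n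
    obtain ⟨⟨z1, hz1⟩, ⟨w1, hw1⟩⟩ := ih1
    obtain ⟨⟨z2, hz2⟩, ⟨w2, hw2⟩⟩ := ih2
    constructor
    · exact ⟨b * z2 + z1, by rw [hp, hz1, hz2]; push_cast; ring⟩
    · exact ⟨b * w2 + w1, by rw [hq, hw1, hw2]; push_cast; ring⟩

lemma det (hα : Irrational α) (n : ℕ) :
    cfNum α n * cfDen α (n+1) - cfDen α n * cfNum α (n+1) = (-1)^(n+1) := by
  let s : SimpContFract ℝ := ⟨GenContFract.of α, GenContFract.of_isSimpContFract α⟩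
  have h := SimpContFract.determinant (s := s) (n := n) (not_term hα n)
  exact h


/-- the error `q_n α - p_n` -/
def ee (α : ℝ) (n : ℕ) : ℝ := cfDen α n * α - cfNum α n

lemma eps_le (hα : Irrational α) (n : ℕ) : |ee α n| * cfDen α (n+1) ≤ 1 := by
  have h := GenContFract.abs_sub_convs_le (v := α) (n := n) (not_term hα n)
  have hconv : (GenContFract.of α).convs n = cfNum α n / cfDen α n :=
    GenContFract.conv_eq_num_div_den
  have hq := q_pos hα n
  have hq1 := q_pos hα (n+1)
  have key : |ee α n| = cfDen α n * |α - (GenContFract.of α).convs n| := by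
    have h0 : ee α n = cfDen α n * (α - (GenContFract.of α).convs n) := by
      rw [hconv, mul_sub, mul_div_cancel₀ _ hq.ne']
      rfl
    rw [h0, abs_mul, abs_of_pos hq]
  rw [key]
  have h2 : cfDen α n * |α - (GenContFract.of α).convs n| ≤
      cfDen α n * (1 / (cfDen α n * cfDen α (n+1))) :=
    mul_le_mul_of_nonneg_left h hq.le
  calc cfDen α n * |α - (GenContFract.of α).convs n| * cfDen α (n+1)
      ≤ cfDen α n * (1 / (cfDen α n * cfDen α (n+1))) * cfDen α (n+1) := by
        exact mul_le_mul_of_nonneg_right h2 hq1.le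
    _ = 1 := by field_simp

lemma eps_ne (hα : Irrational α) (n : ℕ) : ee α n ≠ 0 := by
  intro h
  obtain ⟨⟨z, hz⟩, ⟨w, hw⟩⟩ := exists_int_pq hα n
  have hq := q_pos hα n
  have hqe : cfDen α n * α = cfNum α n := by unfold ee at h; linarith
  rw [hw, hz] at hqe
  have hw0 : (w:ℝ) ≠ 0 := by rw [← hw]; exact hq.ne'
  have : α = (z : ℝ) / (w : ℝ) := by rw [eq_div_iff hw0]; linarith
  exact hα ⟨(z : ℚ) / (w : ℚ), by rw [this]; push_cast; ring⟩

lemma eps_pos (hα : Irrational α) (n : ℕ) : 0 < |ee α n| :=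
  abs_pos.mpr (eps_ne hα n)

lemma det_eps (hα : Irrational α) (n : ℕ) :
    ee α n * cfDen α (n+1) - ee α (n+1) * cfDen α n = (-1)^n := by
  have h := det hα n
  have : ee α n * cfDen α (n+1) - ee α (n+1) * cfDen α n
      = -(cfNum α n * cfDen α (n+1) - cfDen α n * cfNum α (n+1)) := by
    unfold ee; ring
  rw [this, h, pow_succ]; ring

lemma one_le_eps (hα : Irrational α) (n : ℕ) :
    1 ≤ |ee α n| * cfDen α (n+1) + |ee α (n+1)| * cfDen α n := by
  have h := det_eps hα n
  have h1 : |ee α n * cfDen α (n+1) - ee α (n+1) * cfDen α n| = 1 := by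
    rw [h, abs_pow, abs_neg, abs_one, one_pow]
  calc (1:ℝ) = |ee α n * cfDen α (n+1) - ee α (n+1) * cfDen α n| := h1.symm
    _ ≤ |ee α n * cfDen α (n+1)| + |ee α (n+1) * cfDen α n| := abs_sub _ _
    _ = |ee α n| * cfDen α (n+1) + |ee α (n+1)| * cfDen α n := by
        rw [abs_mul, abs_mul, abs_of_pos (q_pos hα (n+1)), abs_of_pos (q_pos hα n)]

lemma eps_lower1 (hα : Irrational α) (n : ℕ) : 1 ≤ |ee α n| * cfDen α (n+2) := by
  have h1 := one_le_eps hα n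
  have h2 := eps_le hα (n+1)
  have hsum := q_sum hα n
  have hq0 := q_pos hα n
  have hq1 := q_pos hα (n+1)
  have hq2 := q_pos hα (n+2)
  have he0 := abs_nonneg (ee α n)
  have he1 := abs_nonneg (ee α (n+1))
  nlinarith [mul_le_mul_of_nonneg_left h2 hq0.le,
    mul_le_mul_of_nonneg_right h1 hq2.le]

lemma eps_mono (hα : Irrational α) (n : ℕ) : |ee α (n+1)| ≤ |ee α n| := by
  have h1 := eps_le hα (n+1)
  have h2 := eps_lower1 hα n
  have hq2 := q_pos hα (n+2)
  nlinarith

lemma eps_lower (hα : Irrational α) (n : ℕ) :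
    1 ≤ |ee α n| * (cfDen α n + cfDen α (n+1)) := by
  have h1 := one_le_eps hα n
  have h2 := eps_mono hα n
  have hq0 := q_pos hα n
  nlinarith

lemma eps_lt (hα : Irrational α) (n : ℕ) : |ee α (n+1)| * cfDen α n < 1 := by
  have h2 := eps_le hα (n+1)
  have hq0 := q_pos hα n
  have hq1 := q_ge_one hα (n+1)
  have hsum := q_sum hα n
  have he1 := eps_pos hα (n+1)
  nlinarith

lemma eps_sign (hα : Irrational α) (n : ℕ) : ee α n * ee α (n+1) < 0 := by
  rcases lt_or_ge (ee α n * ee α (n+1)) 0 with h | h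
  · exact h
  exfalso
  have hd := det_eps hα n
  have hle := eps_le hα n
  have hlt := eps_lt hα n
  have hq0 := q_pos hα n
  have hq1 := q_pos hα (n+1)
  have hn0 := eps_ne hα n
  have hn1 := eps_ne hα (n+1)
  have habs0 : |ee α n| * cfDen α (n+1) ≤ 1 := hle
  rcases Nat.even_or_odd n with he | ho
  · rw [he.neg_one_pow] at hd
    rcases hn0.lt_or_gt with h0 | h0
    · have h1 : ee α (n+1) ≤ 0 := nonpos_of_mul_nonneg_right h h0
      nlinarith [mul_neg_of_neg_of_pos h0 hq1, abs_of_nonpos h1, hlt, hd]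
    · have h1 : 0 ≤ ee α (n+1) := nonneg_of_mul_nonneg_right h h0
      nlinarith [abs_of_pos h0, mul_pos (h1.lt_of_ne' hn1) hq0, hle, hd]
  · rw [ho.neg_one_pow] at hd
    rcases hn0.lt_or_gt with h0 | h0
    · have h1 : ee α (n+1) ≤ 0 := nonpos_of_mul_nonneg_right h h0
      nlinarith [abs_of_neg h0, mul_pos (neg_pos.mpr (h1.lt_of_ne hn1)) hq0, hle, hd]
    · have h1 : 0 ≤ ee α (n+1) := nonneg_of_mul_nonneg_right h h0
      nlinarith [mul_pos h0 hq1, abs_of_nonneg h1, hlt, hd]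

lemma q_lin (hα : Irrational α) (k : ℕ) : (k:ℝ) + 1 ≤ cfDen α (2*k) := by
  induction k with
  | zero => simp [q_zero]
  | succ k ih =>
    have h1 := q_sum hα (2*k)
    have h2 := q_ge_one hα (2*k+1)
    have : 2*(k+1) = 2*k+2 := by ring
    rw [this]
    push_cast
    nlinarith

/-- integer numerator -/
def pInt (α : ℝ) (n : ℕ) : ℤ := ⌊cfNum α n⌋

/-- natural denominator -/
def qNat (α : ℝ) (n : ℕ) : ℕ := ⌊cfDen α n⌋₊

lemma pInt_eq (hα : Irrational α) (n : ℕ) : (pInt α n : ℝ) = cfNum α n := by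
  obtain ⟨⟨z, hz⟩, -⟩ := exists_int_pq hα n
  rw [pInt, hz, Int.floor_intCast]

lemma qNat_eq (hα : Irrational α) (n : ℕ) : (qNat α n : ℝ) = cfDen α n := by
  obtain ⟨-, ⟨z, hz⟩⟩ := exists_int_pq hα n
  have h1 : (1:ℝ) ≤ (z:ℝ) := by rw [← hz]; exact q_ge_one hα n
  have hz1 : (1:ℤ) ≤ z := by exact_mod_cast h1
  have h2 : (z.toNat : ℤ) = z := Int.toNat_of_nonneg (by linarith)
  have hzn : ((z.toNat : ℕ) : ℝ) = (z:ℝ) := by exact_mod_cast h2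
  rw [qNat, hz, ← hzn, Nat.floor_natCast]

lemma qNat_pos (hα : Irrational α) (n : ℕ) : 1 ≤ qNat α n := by
  have := q_ge_one hα n
  rw [← qNat_eq hα n] at this
  exact_mod_cast this

lemma det_int (hα : Irrational α) (n : ℕ) :
    pInt α n * (qNat α (n+1) : ℤ) - (qNat α n : ℤ) * pInt α (n+1) = (-1)^(n+1) := by
  have h := det hα n
  rw [← pInt_eq hα n, ← pInt_eq hα (n+1), ← qNat_eq hα n, ← qNat_eq hα (n+1)] at h
  exact_mod_cast h

lemma coprime_pq (hα : Irrational α) (n : ℕ) :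
    IsCoprime (pInt α (n+1)) ((qNat α (n+1) : ℤ)) := by
  have h := det_int hα n
  rcases Nat.even_or_odd (n+1) with he | ho
  · rw [he.neg_one_pow] at h
    exact ⟨-(qNat α n : ℤ), pInt α n, by linarith⟩
  · rw [ho.neg_one_pow] at h
    exact ⟨(qNat α n : ℤ), -pInt α n, by linarith⟩

lemma exists_k (hα : Irrational α) (j : ℕ) (hj : 1 ≤ j) :
    ∃ k, qNat α k ≤ j ∧ j < qNat α (k+1) := by
  have hP : ∃ k, j < qNat α (k+1) := by
    refine ⟨2*j+1, ?_⟩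
    have := q_lin hα (j+1)
    rw [← qNat_eq hα (2*(j+1))] at this
    have h2 : (j:ℝ) < (qNat α (2*(j+1)) : ℝ) := by push_cast at this ⊢; linarith
    have h3 : j < qNat α (2*(j+1)) := by exact_mod_cast h2
    simpa [show 2*(j+1) = 2*j+1+1 by ring] using h3
  classical
  let k := Nat.find hP
  refine ⟨k, ?_, Nat.find_spec hP⟩
  rcases Nat.eq_zero_or_pos k with h0 | hpos
  · rw [h0]
    have : cfDen α 0 = 1 := q_zero
    have : qNat α 0 = 1 := by
      have := qNat_eq hα 0; rw [q_zero] at this; exact_mod_cast this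
    omega
  · have hk : k - 1 + 1 = k := Nat.succ_pred_eq_of_pos hpos
    have hmin := Nat.find_min hP (m := k - 1) (by omega)
    rw [hk] at hmin
    omega

/-- Lemma L : badly approximable -/
lemma badly (hα : Irrational α) {M : ℝ} (hM : 1 ≤ M)
    (hbdd : ∀ n : ℕ, cfDen α (n + 1) ≤ M * cfDen α n)
    (j : ℕ) (hj : 1 ≤ j) (z : ℤ) : 1 / (M^3 * j) ≤ |(j:ℝ) * α - z| := by
  obtain ⟨k, hk1, hk2⟩ := exists_k hα j hj
  set Q0 := cfDen α k with hQ0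
  set Q1 := cfDen α (k+1) with hQ1
  set Q2 := cfDen α (k+2) with hQ2
  set E := |(j:ℝ) * α - z| with hE
  set ae := |ee α (k+1)| with hae
  have hq0 := q_pos hα k
  have hq1 := q_pos hα (k+1)
  have hq2 := q_pos hα (k+2)
  have hq0' := q_ge_one hα k
  -- the integer j * p_{k+1} - z * q_{k+1} is nonzero
  have hnz : (j : ℤ) * pInt α (k+1) - z * (qNat α (k+1) : ℤ) ≠ 0 := by
    intro h
    have hdvd : (qNat α (k+1) : ℤ) ∣ (j : ℤ) * pInt α (k+1) :=
      ⟨z, by linarith [h]⟩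
    have hcop := (coprime_pq hα k).symm
    have : (qNat α (k+1) : ℤ) ∣ (j : ℤ) := hcop.dvd_of_dvd_mul_right hdvd
    have : (qNat α (k+1) : ℤ) ≤ (j : ℤ) := Int.le_of_dvd (by exact_mod_cast hj) this
    have : qNat α (k+1) ≤ j := by exact_mod_cast this
    omega
  have hA : (1:ℝ) ≤ |(j:ℝ) * (pInt α (k+1) : ℝ) - z * Q1| := by
    have h1 : (1:ℤ) ≤ |(j : ℤ) * pInt α (k+1) - z * (qNat α (k+1) : ℤ)| :=
      Int.one_le_abs hnz
    have := qNat_eq hα (k+1)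
    calc (1:ℝ) = ((1:ℤ) : ℝ) := by norm_num
      _ ≤ (|(j : ℤ) * pInt α (k+1) - z * (qNat α (k+1) : ℤ)| : ℝ) := by exact_mod_cast h1
      _ = |(j:ℝ) * (pInt α (k+1) : ℝ) - z * Q1| := by
          rw [hQ1, ← this]
          push_cast
          ring_nf
  have hB : ae * Q2 ≤ 1 := eps_le hα (k+1)
  -- triangle inequality: |j p - z Q1| ≤ Q1 E + j ae
  have htri : (1:ℝ) ≤ Q1 * E + j * ae := by
    have hid : (j:ℝ) * (pInt α (k+1) : ℝ) - z * Q1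
        = Q1 * ((j:ℝ) * α - z) - (j:ℝ) * (ee α (k+1)) := by
      rw [pInt_eq hα (k+1)]
      unfold ee
      rw [← hQ1]
      ring
    calc (1:ℝ) ≤ |(j:ℝ) * (pInt α (k+1) : ℝ) - z * Q1| := hA
      _ = |Q1 * ((j:ℝ) * α - z) - (j:ℝ) * (ee α (k+1))| := by rw [hid]
      _ ≤ |Q1 * ((j:ℝ) * α - z)| + |(j:ℝ) * (ee α (k+1))| := abs_sub _ _
      _ = Q1 * E + j * ae := by
          rw [abs_mul, abs_mul, abs_of_pos hq1, Nat.abs_cast]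
  have hjQ1 : (j:ℝ) + 1 ≤ Q1 := by
    have : (j:ℝ) + 1 ≤ (qNat α (k+1) : ℝ) := by exact_mod_cast hk2
    rw [qNat_eq hα (k+1)] at this
    exact this
  have hQ0j : Q0 ≤ (j:ℝ) := by
    have : (qNat α k : ℝ) ≤ (j:ℝ) := by exact_mod_cast hk1
    rw [qNat_eq hα k] at this
    exact this
  have hsum := q_sum hα k
  have hb1 : Q1 ≤ M * Q0 := hbdd k
  have hb2 : Q2 ≤ M * Q1 := hbdd (k+1)
  have hae0 : 0 ≤ ae := abs_nonneg _
  have hE0 : 0 ≤ E := abs_nonneg _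
  have hj1 : (1:ℝ) ≤ (j:ℝ) := by exact_mod_cast hj
  -- step 1 : Q0 ≤ E * Q1 * Q2
  have step1 : Q0 ≤ E * Q1 * Q2 := by
    nlinarith [mul_le_mul_of_nonneg_right htri hq2.le,
      mul_le_mul_of_nonneg_left hB (by positivity : (0:ℝ) ≤ (j:ℝ))]
  -- step 2
  have hQ2' : Q2 ≤ M^2 * Q0 := by nlinarith
  have hM3 : Q1 * Q2 ≤ M^3 * Q0 * (j:ℝ) := by
    nlinarith [mul_le_mul hb1 hQ2' hq2.le (by positivity : (0:ℝ) ≤ M * Q0),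
      mul_le_mul_of_nonneg_left hQ0j (show (0:ℝ) ≤ M^3 * Q0 * Q0 / Q0 by positivity),
      mul_le_mul_of_nonneg_left hQ0j (show (0:ℝ) ≤ M^3 * Q0 by positivity)]
  have hMj : (0:ℝ) < M^3 * j := by positivity
  rw [div_le_iff₀ hMj]
  nlinarith [mul_le_mul_of_nonneg_left step1 hE0, mul_le_mul_of_nonneg_left hM3 hE0]

lemma cross_pos {o s B : ℝ} (hs : 0 < s) (ho : o ≤ 0) (hB : -o ≤ B) :
    ∃ t : ℕ, (t:ℝ) ≤ B/s + 1 ∧ 0 ≤ o + t*s ∧ o + t*s ≤ s := by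
  refine ⟨⌈(-o)/s⌉₊, ?_, ?_, ?_⟩
  · have h2 : (⌈(-o)/s⌉₊ : ℝ) < (-o)/s + 1 :=
      Nat.ceil_lt_add_one (div_nonneg (by linarith) hs.le)
    have h3 : (-o)/s ≤ B/s := by gcongr
    linarith
  · have h1 : (-o)/s ≤ (⌈(-o)/s⌉₊ : ℝ) := Nat.le_ceil _
    have := mul_le_mul_of_nonneg_right h1 hs.le
    rw [div_mul_cancel₀ _ hs.ne'] at this
    linarith
  · have h2 : (⌈(-o)/s⌉₊ : ℝ) < (-o)/s + 1 :=
      Nat.ceil_lt_add_one (div_nonneg (by linarith) hs.le)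
    have := mul_le_mul_of_nonneg_right h2.le hs.le
    rw [add_mul, div_mul_cancel₀ _ hs.ne'] at this
    linarith

lemma cross {o s B : ℝ} (hs : s ≠ 0) (hos : o * s ≤ 0) (hB : |o| ≤ B) :
    ∃ t : ℕ, (t:ℝ) ≤ B/|s| + 1 ∧ (o + t*s) ∈ Set.uIcc 0 s := by
  rcases hs.lt_or_gt with hneg | hpos
  · have ho : 0 ≤ o := by nlinarith
    obtain ⟨t, h1, h2, h3⟩ := cross_pos (o := -o) (s := -s) (B := B)
      (by linarith) (by linarith) (by rw [abs_of_nonneg ho] at hB; linarith)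
    refine ⟨t, ?_, ?_⟩
    · rwa [abs_of_neg hneg]
    · rw [Set.mem_uIcc]
      right
      constructor <;> nlinarith
  · have ho : o ≤ 0 := by nlinarith
    obtain ⟨t, h1, h2, h3⟩ := cross_pos (o := o) (s := s) (B := B)
      hpos ho (by rw [abs_of_nonpos ho] at hB; linarith)
    refine ⟨t, ?_, ?_⟩
    · rwa [abs_of_pos hpos]
    · rw [Set.mem_uIcc]
      left
      exact ⟨h2, h3⟩

set_option maxHeartbeats 2000000 in
/-- the descent lemma: from any point, the orbit lands within `|ee α m|`
(one-sidedly) of any target `c`, in time `≤ 4 q_{m+1} + 3 q_m + 4 M q_2`. -/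
lemma descent (hα : Irrational α) {M : ℝ} (hM : 1 ≤ M)
    (hbdd : ∀ n : ℕ, cfDen α (n + 1) ≤ M * cfDen α n) (c x : ℝ) :
    ∀ m, 1 ≤ m → ∃ (i : ℕ) (k : ℤ), 1 ≤ i ∧
      ((i:ℝ) ≤ 4 * cfDen α (m+1) + 3 * cfDen α m + 4 * M * cfDen α 2) ∧
      (x + 2*π*i*α - 2*π*k - c) ∈ Set.uIcc 0 (2*π*(ee α m)) := by
  have hπ := Real.pi_pos
  intro m hm
  induction m, hm using Nat.le_induction with
  | base =>
    set y := x + 2*π*(1:ℕ)*α - c with hy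
    have he1 := eps_ne hα 1
    have hq1 := q_pos hα 1
    have hq2 := q_pos hα 2
    have hq11 := q_ge_one hα 1
    have hq21 := q_ge_one hα 2
    have hq12 := q_mono hα 1
    have hq1M : cfDen α 1 ≤ M := by
      have := hbdd 0; rwa [q_zero, mul_one] at this
    -- choose k₀ so that the initial offset has sign opposite to ee α 1
    have key : ∃ k₀ : ℤ, (y - 2*π*k₀) * (2*π*(ee α 1)) ≤ 0 ∧ |y - 2*π*k₀| ≤ 2*π := by
      rcases he1.lt_or_gt with hlt | hgt
      · -- ee α 1 < 0 : take offset in [0, 2π)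
        refine ⟨⌊y/(2*π)⌋, ?_, ?_⟩
        · have h1 : 0 ≤ y/(2*π) - ⌊y/(2*π)⌋ := by
            linarith [Int.floor_le (y/(2*π))]
          have h2 : 0 ≤ y - 2*π*⌊y/(2*π)⌋ := by
            have := mul_le_mul_of_nonneg_left h1 (by linarith : (0:ℝ) ≤ 2*π)
            rw [mul_sub] at this
            rw [mul_div_cancel₀ _ (by positivity : (2:ℝ)*π ≠ 0)] at this
            linarith
          have h3 : 2*π*(ee α 1) < 0 := by nlinarith
          nlinarith
        · have h1 : y/(2*π) - ⌊y/(2*π)⌋ < 1 := by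
            linarith [Int.lt_floor_add_one (y/(2*π))]
          have h0 : 0 ≤ y/(2*π) - ⌊y/(2*π)⌋ := by
            linarith [Int.floor_le (y/(2*π))]
          have h2 := mul_le_mul_of_nonneg_left h1.le (by linarith : (0:ℝ) ≤ 2*π)
          have h2' := mul_le_mul_of_nonneg_left h0 (by linarith : (0:ℝ) ≤ 2*π)
          rw [mul_sub, mul_div_cancel₀ _ (by positivity : (2:ℝ)*π ≠ 0)] at h2 h2'
          rw [abs_le]
          constructor <;> nlinarith
      · -- ee α 1 > 0 : take offset in (-2π, 0]
        refine ⟨⌈y/(2*π)⌉, ?_, ?_⟩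
        · have h1 : 0 ≤ (⌈y/(2*π)⌉ : ℝ) - y/(2*π) := by
            linarith [Int.le_ceil (y/(2*π))]
          have h2 : y - 2*π*⌈y/(2*π)⌉ ≤ 0 := by
            have := mul_le_mul_of_nonneg_left h1 (by linarith : (0:ℝ) ≤ 2*π)
            rw [mul_sub, mul_div_cancel₀ _ (by positivity : (2:ℝ)*π ≠ 0)] at this
            linarith
          exact mul_nonpos_of_nonpos_of_nonneg h2 (by nlinarith)
        · have h1 : (⌈y/(2*π)⌉ : ℝ) - y/(2*π) < 1 := by
            linarith [Int.ceil_lt_add_one (y/(2*π))]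
          have h0 : 0 ≤ (⌈y/(2*π)⌉ : ℝ) - y/(2*π) := by
            linarith [Int.le_ceil (y/(2*π))]
          have h2 := mul_le_mul_of_nonneg_left h1.le (by linarith : (0:ℝ) ≤ 2*π)
          have h2' := mul_le_mul_of_nonneg_left h0 (by linarith : (0:ℝ) ≤ 2*π)
          rw [mul_sub, mul_div_cancel₀ _ (by positivity : (2:ℝ)*π ≠ 0)] at h2 h2'
          rw [abs_le]
          constructor <;> nlinarith
    obtain ⟨k₀, hsign, habs⟩ := key
    have hs1 : (2*π*(ee α 1)) ≠ 0 := mul_ne_zero (by positivity) he1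
    obtain ⟨t, ht, hmem⟩ := cross hs1 hsign habs
    refine ⟨1 + t * qNat α 1, k₀ + t * pInt α 1, Nat.le_add_right 1 _, ?_, ?_⟩
    · -- time bound
      have habs' : |2*π*(ee α 1)| = 2*π*|ee α 1| := by
        rw [abs_mul, abs_of_pos (by linarith : (0:ℝ) < 2*π)]
      rw [habs'] at ht
      have hee := eps_pos hα 1
      have hlb := eps_lower hα 1
      -- 2π/(2π|ee 1|) = 1/|ee 1| ≤ q1 + q2
      have hinv : (2*π)/(2*π*|ee α 1|) ≤ cfDen α 1 + cfDen α 2 := by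
        rw [div_le_iff₀ (by positivity)]
        nlinarith
      have htb : (t:ℝ) ≤ cfDen α 1 + cfDen α 2 + 1 := by linarith
      have hcast : ((1 + t * qNat α 1 : ℕ) : ℝ) = 1 + (t:ℝ) * cfDen α 1 := by
        push_cast [qNat_eq hα 1]
        ring
      rw [hcast]
      have ht0 : (0:ℝ) ≤ t := Nat.cast_nonneg t
      have hb : 1 + (t:ℝ) * cfDen α 1 ≤ 4 * M * cfDen α 2 := by
        nlinarith [mul_le_mul_of_nonneg_right htb hq1.le,
          mul_le_mul hq1M hq12 hq1.le (by linarith : (0:ℝ) ≤ M)]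
      nlinarith [q_pos hα (1+1), q_pos hα 1]
    · -- landing
      have hcast : ((1 + t * qNat α 1 : ℕ) : ℝ) = 1 + (t:ℝ) * cfDen α 1 := by
        push_cast [qNat_eq hα 1]
        ring
      have hid : x + 2*π*((1 + t * qNat α 1 : ℕ):ℝ)*α - 2*π*((k₀ + t * pInt α 1 : ℤ):ℝ) - c
          = (y - 2*π*k₀) + (t:ℝ)*(2*π*(ee α 1)) := by
        unfold ee
        rw [hy, ← pInt_eq hα 1, ← qNat_eq hα 1]
        push_cast
        ring
      rw [hid]
      exact hmem
  | succ m hm ih =>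
    obtain ⟨i, k, hi1, hib, ho⟩ := ih
    set o := x + 2*π*i*α - 2*π*k - c with hodef
    clear_value o
    have hem := eps_ne hα m
    have hem1 := eps_ne hα (m+1)
    have hsgn := eps_sign hα m
    have hq1 := q_pos hα (m+1)
    have hq2 := q_pos hα (m+2)
    have hs1 : (2*π*(ee α (m+1))) ≠ 0 := mul_ne_zero (by positivity) hem1
    -- sign condition
    have h2pi : (0:ℝ) < 2*π := by linarith
    have hos : o * (2*π*(ee α (m+1))) ≤ 0 := by
      rcases Set.mem_uIcc.mp ho with ⟨h1, h2⟩ | ⟨h1, h2⟩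
      · -- 0 ≤ o ≤ 2π ee m, so ee m > 0, hence ee (m+1) < 0
        rcases hem.lt_or_gt with hneg | hpos
        · have hz : o = 0 := le_antisymm
            (h2.trans (mul_nonpos_of_nonneg_of_nonpos h2pi.le hneg.le)) h1
          rw [hz, zero_mul]
        · have hneg1 : ee α (m+1) ≤ 0 := by
            by_contra h'
            push_neg at h'
            exact absurd (mul_pos hpos h') (by linarith [hsgn])
          exact mul_nonpos_of_nonneg_of_nonpos h1
            (mul_nonpos_of_nonneg_of_nonpos h2pi.le hneg1)
      · rcases hem.lt_or_gt with hneg | hpos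
        · have hpos1 : 0 ≤ ee α (m+1) := by
            by_contra h'
            push_neg at h'
            exact absurd (mul_pos_of_neg_of_neg hneg h') (by linarith [hsgn])
          exact mul_nonpos_of_nonpos_of_nonneg h2
            (mul_nonneg h2pi.le hpos1)
        · have hz : o = 0 := le_antisymm h2
            ((mul_nonneg h2pi.le hpos.le).trans h1)
          rw [hz, zero_mul]
    have hoB : |o| ≤ 2*π*|ee α m| := by
      have habs2 : 2*π*(ee α m) ≤ 2*π*|ee α m| :=
        mul_le_mul_of_nonneg_left (le_abs_self _) h2pi.le
      have habs3 : -(2*π*(ee α m)) ≤ 2*π*|ee α m| := by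
        have := mul_le_mul_of_nonneg_left (neg_abs_le (ee α m)) h2pi.le
        linarith
      rcases Set.mem_uIcc.mp ho with ⟨h1, h2⟩ | ⟨h1, h2⟩
      · rw [abs_of_nonneg h1]
        linarith
      · rw [abs_of_nonpos h2]
        linarith
    obtain ⟨t, ht, hmem⟩ := cross hs1 hos hoB
    refine ⟨i + t * qNat α (m+1), k + t * pInt α (m+1), le_trans hi1 (Nat.le_add_right i _), ?_, ?_⟩
    · -- time bound
      have habs' : |2*π*(ee α (m+1))| = 2*π*|ee α (m+1)| := by
        rw [abs_mul, abs_of_pos (by linarith : (0:ℝ) < 2*π)]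
      rw [habs'] at ht
      have hee1 := eps_pos hα (m+1)
      have hlb := eps_lower hα (m+1)   -- 1 ≤ |ee (m+1)| (q_{m+1} + q_{m+2})
      have hub := eps_le hα m          -- |ee m| q_{m+1} ≤ 1
      -- t ≤ |ee m|/|ee (m+1)| + 1 and |ee m| q_{m+1} / |ee(m+1)| ≤ q_{m+1}+q_{m+2}
      have hX : (2*π*|ee α m|)/(2*π*|ee α (m+1)|) * cfDen α (m+1)
          ≤ cfDen α (m+1) + cfDen α (m+2) := by
        rw [div_mul_eq_mul_div, div_le_iff₀ (mul_pos h2pi hee1)]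
        have h1 : |ee α m| * cfDen α (m+1) ≤ 1 := hub
        nlinarith [mul_le_mul_of_nonneg_left hub h2pi.le,
          mul_le_mul_of_nonneg_left hlb h2pi.le]
      have htq : (t:ℝ) * cfDen α (m+1) ≤ 2 * cfDen α (m+1) + cfDen α (m+2) := by
        have := mul_le_mul_of_nonneg_right ht hq1.le
        rw [add_mul] at this
        linarith
      have hcast : ((i + t * qNat α (m+1) : ℕ) : ℝ) = (i:ℝ) + (t:ℝ) * cfDen α (m+1) := by
        push_cast [qNat_eq hα (m+1)]
        ring
      rw [hcast]
      have hsum := q_sum hα m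
      linarith
    · -- landing
      have hcast : ((i + t * qNat α (m+1) : ℕ) : ℝ) = (i:ℝ) + (t:ℝ) * cfDen α (m+1) := by
        push_cast [qNat_eq hα (m+1)]
        ring
      have hid : x + 2*π*((i + t * qNat α (m+1) : ℕ):ℝ)*α
            - 2*π*((k + t * pInt α (m+1) : ℤ):ℝ) - c
          = o + (t:ℝ)*(2*π*(ee α (m+1))) := by
        unfold ee
        rw [hodef, ← pInt_eq hα (m+1), ← qNat_eq hα (m+1)]
        push_cast
        ring
      rw [hid]
      exact hmem

lemma critSet_mono {c₁ ρ ρ' : ℝ} (h : ρ ≤ ρ') : critSet c₁ ρ ⊆ critSet c₁ ρ' :=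
  Set.union_subset_union
    (Set.Icc_subset_Icc (by linarith) (by linarith))
    (Set.Icc_subset_Icc (by linarith) (by linarith))

lemma inCircle_mono {S T : Set ℝ} (h : S ⊆ T) {x : ℝ} (hx : InCircle S x) :
    InCircle T x := by
  obtain ⟨k, hk⟩ := hx
  exact ⟨k, h hk⟩

lemma self_mem_critSet {c₁ ρ : ℝ} (hρ : 0 ≤ ρ) : c₁ ∈ critSet c₁ ρ :=
  Set.mem_union_left _ (Set.mem_Icc.mpr ⟨by linarith, by linarith⟩)

lemma orbit_hits (hα : Irrational α) {M : ℝ} (hM : 1 ≤ M)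
    (hbdd : ∀ n : ℕ, cfDen α (n + 1) ≤ M * cfDen α n)
    {ρ : ℝ} {m : ℕ} (hm : 1 ≤ m) (hρ : 2*π*|ee α m| ≤ ρ) (c₁ x : ℝ) :
    ∃ i : ℕ, (0 < i ∧ InCircle (critSet c₁ ρ) (x + 2*π*i*α)) ∧
      (i:ℝ) ≤ 4*cfDen α (m+1) + 3*cfDen α m + 4*M*cfDen α 2 := by
  have hπ := Real.pi_pos
  obtain ⟨i, k, hi1, hib, hmem⟩ := descent hα hM hbdd c₁ x m hm
  have habs : |x + 2*π*i*α - 2*π*k - c₁| ≤ ρ := by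
    have h2 : 2*π*(ee α m) ≤ 2*π*|ee α m| :=
      mul_le_mul_of_nonneg_left (le_abs_self _) (by linarith)
    have h3 : -(2*π*(ee α m)) ≤ 2*π*|ee α m| := by
      have := mul_le_mul_of_nonneg_left (neg_abs_le (ee α m)) (by linarith : (0:ℝ) ≤ 2*π)
      linarith
    rcases Set.mem_uIcc.mp hmem with ⟨ha, hb⟩ | ⟨ha, hb⟩
    · rw [abs_of_nonneg ha]; linarith
    · rw [abs_of_nonpos hb]; linarith
  rw [abs_le] at habs
  exact ⟨i, ⟨hi1, ⟨k, Set.mem_union_left _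
    (Set.mem_Icc.mpr ⟨by linarith [habs.1], by linarith [habs.2]⟩)⟩⟩, hib⟩

lemma return_lower (hα : Irrational α) {M : ℝ} (hM : 1 ≤ M)
    (hbdd : ∀ n : ℕ, cfDen α (n + 1) ≤ M * cfDen α n)
    {r : ℝ} (hr : 0 < r) (c₁ : ℝ) {x : ℝ}
    (hx : x ∈ critSet c₁ r) {i : ℕ} (hi : 0 < i)
    (hIn : InCircle (critSet c₁ r) (x + 2*π*i*α)) :
    π ≤ 4*M^3*r*(i:ℝ) := by
  have hπ := Real.pi_pos
  obtain ⟨k, hk⟩ := hIn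
  have key : ∃ z : ℤ, |(2*(i:ℝ)*α - z) * π| ≤ 2*r := by
    rcases hx with hx | hx <;> rcases hk with hk | hk <;>
      rw [Set.mem_Icc] at hx hk
    · refine ⟨2*k, ?_⟩
      rw [abs_le]; push_cast
      constructor <;> nlinarith [hx.1, hx.2, hk.1, hk.2]
    · refine ⟨2*k+1, ?_⟩
      rw [abs_le]; push_cast
      constructor <;> nlinarith [hx.1, hx.2, hk.1, hk.2]
    · refine ⟨2*k-1, ?_⟩
      rw [abs_le]; push_cast
      constructor <;> nlinarith [hx.1, hx.2, hk.1, hk.2]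
    · refine ⟨2*k, ?_⟩
      rw [abs_le]; push_cast
      constructor <;> nlinarith [hx.1, hx.2, hk.1, hk.2]
  obtain ⟨z, hz⟩ := key
  have hb := badly hα hM hbdd (2*i) (by omega) z
  have hcast : ((2*i : ℕ) : ℝ) = 2*(i:ℝ) := by push_cast; ring
  rw [hcast] at hb
  -- |2iα - z| ≤ 2r/π
  have habs : |2*(i:ℝ)*α - z| * π ≤ 2*r := by
    rwa [abs_mul, abs_of_pos hπ] at hz
  have hMi : (0:ℝ) < M^3*(2*(i:ℝ)) := by
    have : (0:ℝ) < (i:ℝ) := by exact_mod_cast hi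
    positivity
  rw [div_le_iff₀ hMi] at hb
  -- 1 ≤ |…| M³ 2i  and |…| π ≤ 2r
  have hab : (0:ℝ) ≤ |2*(i:ℝ)*α - z| := abs_nonneg _
  nlinarith [mul_le_mul_of_nonneg_left habs (by positivity : (0:ℝ) ≤ M^3*(2*(i:ℝ))),
    mul_le_mul_of_nonneg_right hb hπ.le]

lemma exists_small_eps (hα : Irrational α) {θ : ℝ} (hθ : 0 < θ) :
    ∃ m, 1 ≤ m ∧ |ee α m| ≤ θ := by
  set k := max 1 ⌈1/θ⌉₊ with hk
  refine ⟨2*k - 1, by omega, ?_⟩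
  have hk1 : 1 ≤ k := le_max_left _ _
  have hm1 : 2*k - 1 + 1 = 2*k := by omega
  have hlin := q_lin hα k
  have hle := eps_le hα (2*k-1)
  rw [hm1] at hle
  have hceil : 1/θ ≤ (k:ℝ) := by
    calc 1/θ ≤ (⌈1/θ⌉₊ : ℝ) := Nat.le_ceil _
      _ ≤ (k:ℝ) := by exact_mod_cast le_max_right 1 ⌈1/θ⌉₊
  have hq : 1/θ ≤ cfDen α (2*k) := by
    calc 1/θ ≤ (k:ℝ) := hceil
      _ ≤ cfDen α (2*k) := by linarith
  have hq0 := q_pos hα (2*k)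
  have h1θ : 1 ≤ θ * cfDen α (2*k) := by
    rw [div_le_iff₀ hθ] at hq
    linarith
  nlinarith [abs_nonneg (ee α (2*k-1))]

lemma q_le_pow (hα : Irrational α) {M : ℝ} (hM : 1 ≤ M)
    (hbdd : ∀ n : ℕ, cfDen α (n + 1) ≤ M * cfDen α n) (j : ℕ) :
    cfDen α j ≤ M^j := by
  induction j with
  | zero => rw [q_zero, pow_zero]
  | succ j ih =>
    calc cfDen α (j+1) ≤ M * cfDen α j := hbdd j
      _ ≤ M * M^j := by nlinarith [q_pos hα j]
      _ = M^(j+1) := by ring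

lemma q8_ge (hα : Irrational α) : (34:ℝ) ≤ cfDen α 8 := by
  have h0 : cfDen α 0 = 1 := q_zero
  have h1 := q_ge_one hα 1
  have s0 := q_sum hα 0
  have s1 := q_sum hα 1
  have s2 := q_sum hα 2
  have s3 := q_sum hα 3
  have s4 := q_sum hα 4
  have s5 := q_sum hα 5
  have s6 := q_sum hα 6
  norm_num at s0 s1 s2 s3 s4 s5 s6
  linarith

lemma M8_ge (hα : Irrational α) {M : ℝ} (hM : 1 ≤ M)
    (hbdd : ∀ n : ℕ, cfDen α (n + 1) ≤ M * cfDen α n) : (34:ℝ) ≤ M^8 :=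
  le_trans (q8_ge hα) (q_le_pow hα hM hbdd 8)

lemma q_mono_le (hα : Irrational α) {a b : ℕ} (h : a ≤ b) : cfDen α a ≤ cfDen α b :=
  monotone_nat_of_le_succ (fun k => q_mono hα k) h

end CFAux

set_option maxHeartbeats 2000000 in
/-- **Comparison of return times** (Lemma 3.5; Corollary 4.1 of Wang–You).
Let `α` be of bounded type with constant `M`, `β > 1`, and let `I_n` (resp. `(1/10)I_n`)
be the two intervals of radius `q_n^{−β}` (resp. `1/(10 q_n^β)`) around `c₁, c₁ + π`.
With `min rₙ = min_{x ∈ Iₙ} min{i > 0 : T^i x ∈ Iₙ}` and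
`max rₙ = max_{x ∈ (1/10)Iₙ} min{i > 0 : T^i x ∈ (1/10)Iₙ}`, one has
`M^{−20} ≤ (min rₙ)/(max rₙ) ≤ 1`. -/
theorem return_time_comparison (α M β c₁ : ℝ) (hα : Irrational α) (hM : 1 ≤ M)
    (hbdd : BoundedType α M) (hβ : 1 < β) (hc₁ : c₁ ∈ Set.Ico (0 : ℝ) π) (n : ℕ) :
    (M ^ (20 : ℕ))⁻¹ ≤
        ((sInf {m : ℕ | ∃ x ∈ critSet c₁ (cfDen α n ^ (-β)),
            m = returnTime α (critSet c₁ (cfDen α n ^ (-β))) x} : ℕ) : ℝ) /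
          ((sSup {m : ℕ | ∃ x ∈ critSet c₁ (cfDen α n ^ (-β) / 10),
            m = returnTime α (critSet c₁ (cfDen α n ^ (-β) / 10)) x} : ℕ) : ℝ) ∧
      ((sInf {m : ℕ | ∃ x ∈ critSet c₁ (cfDen α n ^ (-β)),
            m = returnTime α (critSet c₁ (cfDen α n ^ (-β))) x} : ℕ) : ℝ) /
          ((sSup {m : ℕ | ∃ x ∈ critSet c₁ (cfDen α n ^ (-β) / 10),
            m = returnTime α (critSet c₁ (cfDen α n ^ (-β) / 10)) x} : ℕ) : ℝ) ≤ 1 := by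
  classical
  have hπ := Real.pi_pos
  have hbdd' : ∀ k : ℕ, cfDen α (k + 1) ≤ M * cfDen α k := hbdd
  set r : ℝ := cfDen α n ^ (-β) with hrdef
  have hr : 0 < r := Real.rpow_pos_of_pos (CFAux.q_pos hα n) _
  have hr10 : r/10 ≤ r := by linarith
  -- threshold selection
  have hex : ∃ m, 1 ≤ m ∧ 2*π*|CFAux.ee α m| ≤ r/10 := by
    obtain ⟨m₀, hm₀1, hm₀e⟩ := CFAux.exists_small_eps hα
      (show 0 < r/10/(2*π) by positivity)
    refine ⟨m₀, hm₀1, ?_⟩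
    rw [le_div_iff₀ (by positivity : (0:ℝ) < 2*π)] at hm₀e
    linarith
  set m := Nat.find hex with hmdef
  obtain ⟨hm1, hme⟩ : 1 ≤ m ∧ 2*π*|CFAux.ee α m| ≤ r/10 := Nat.find_spec hex
  set S₁ := critSet c₁ r with hS₁def
  set S₂ := critSet c₁ (r/10) with hS₂def
  set F : ℝ := 4*cfDen α (m+1) + 3*cfDen α m + 4*M*cfDen α 2 with hFdef
  set KA := {m' : ℕ | ∃ x ∈ S₁, m' = returnTime α S₁ x} with hKAdef
  set KB := {m' : ℕ | ∃ x ∈ S₂, m' = returnTime α S₂ x} with hKBdef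
  set A := sInf KA with hAdef
  set B := sSup KB with hBdef
  -- key orbit facts
  have hkey2 : ∀ x:ℝ, ∃ i:ℕ, (0 < i ∧ InCircle S₂ (x + 2*π*i*α)) ∧ (i:ℝ) ≤ F :=
    fun x => CFAux.orbit_hits hα hM hbdd' hm1 hme c₁ x
  have hkey1 : ∀ x:ℝ, ∃ i:ℕ, 0 < i ∧ InCircle S₁ (x + 2*π*i*α) := by
    intro x
    obtain ⟨i, ⟨h1, h2⟩, -⟩ := hkey2 x
    exact ⟨i, h1, CFAux.inCircle_mono (CFAux.critSet_mono hr10) h2⟩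
  have hretB_le : ∀ x:ℝ, (returnTime α S₂ x : ℝ) ≤ F := by
    intro x
    obtain ⟨i, hmem, hile⟩ := hkey2 x
    have h1 : returnTime α S₂ x ≤ i := Nat.sInf_le hmem
    calc (returnTime α S₂ x : ℝ) ≤ (i:ℝ) := by exact_mod_cast h1
      _ ≤ F := hile
  have hF0 : (0:ℝ) ≤ F := le_trans (Nat.cast_nonneg _) (hretB_le c₁)
  have hBddKB : BddAbove KB := by
    refine ⟨⌊F⌋₊, fun w hw => ?_⟩
    obtain ⟨x, hx, rfl⟩ := hw
    exact Nat.le_floor (hretB_le x)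
  have hBne : KB.Nonempty := ⟨returnTime α S₂ c₁, c₁,
    CFAux.self_mem_critSet (by positivity), rfl⟩
  have hAne : KA.Nonempty := ⟨returnTime α S₁ c₁, c₁,
    CFAux.self_mem_critSet hr.le, rfl⟩
  have hB_le : (B:ℝ) ≤ F := by
    have h1 : B ≤ ⌊F⌋₊ := csSup_le hBne (fun w hw => by
      obtain ⟨x, hx, rfl⟩ := hw
      exact Nat.le_floor (hretB_le x))
    calc (B:ℝ) ≤ (⌊F⌋₊:ℝ) := by exact_mod_cast h1
      _ ≤ F := Nat.floor_le hF0
  -- lower bound for A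
  obtain ⟨x₀, hx₀, hAeq⟩ := Nat.sInf_mem hAne
  have hTne : {i : ℕ | 0 < i ∧ InCircle S₁ (x₀ + 2*π*i*α)}.Nonempty := hkey1 x₀
  have hTmem : 0 < returnTime α S₁ x₀ ∧
      InCircle S₁ (x₀ + 2*π*(returnTime α S₁ x₀)*α) := Nat.sInf_mem hTne
  have hA_low : π ≤ 4*M^3*r*(A:ℝ) := by
    rw [hAdef, hAeq]
    exact CFAux.return_lower hα hM hbdd' hr c₁ hx₀ hTmem.1 hTmem.2
  have hA1 : 1 ≤ A := by rw [hAdef, hAeq]; exact hTmem.1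
  -- A ≤ B
  have hstep1 : A ≤ returnTime α S₁ c₁ :=
    Nat.sInf_le ⟨c₁, CFAux.self_mem_critSet hr.le, rfl⟩
  have hstep2 : returnTime α S₁ c₁ ≤ returnTime α S₂ c₁ := by
    have hTne2 : {i : ℕ | 0 < i ∧ InCircle S₂ (c₁ + 2*π*i*α)}.Nonempty := by
      obtain ⟨i, h, -⟩ := hkey2 c₁
      exact ⟨i, h⟩
    have h2 : 0 < returnTime α S₂ c₁ ∧
        InCircle S₂ (c₁ + 2*π*(returnTime α S₂ c₁)*α) := Nat.sInf_mem hTne2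
    exact Nat.sInf_le ⟨h2.1, CFAux.inCircle_mono (CFAux.critSet_mono hr10) h2.2⟩
  have hstep3 : returnTime α S₂ c₁ ≤ B :=
    le_csSup hBddKB ⟨c₁, CFAux.self_mem_critSet (by positivity), rfl⟩
  have hAB : A ≤ B := le_trans hstep1 (le_trans hstep2 hstep3)
  -- numerics
  have hM8 := CFAux.M8_ge hα hM hbdd'
  have h1156 : (1156:ℝ) ≤ M^8*M^8 := by nlinarith
  have hA1' : (1:ℝ) ≤ (A:ℝ) := by exact_mod_cast hA1
  have hcomp : F ≤ M^(20:ℕ) * (A:ℝ) := by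
    rcases Nat.lt_or_ge m 2 with hc | hc
    · -- m = 1
      have hm_eq : m = 1 := by omega
      have hq1M : cfDen α 1 ≤ M := by
        have := hbdd' 0
        rwa [CFAux.q_zero, mul_one] at this
      have hq2M : cfDen α 2 ≤ M^2 := by
        have := CFAux.q_le_pow hα hM hbdd' 2
        simpa using this
      have hFval : F = 4*cfDen α 2 + 3*cfDen α 1 + 4*M*cfDen α 2 := by
        rw [hFdef, hm_eq]
      have hF11 : F ≤ 11*M^3 := by
        rw [hFval]
        nlinarith [CFAux.q_pos hα 1, CFAux.q_pos hα 2, CFAux.q_ge_one hα 2]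
      have hpow : M^(20:ℕ) = (M^8*M^8)*(M*M^3) := by ring
      have hM4 : M^3 ≤ M*M^3 := by
        nlinarith [pow_nonneg (show (0:ℝ) ≤ M by linarith) 3]
      have h20 : 11*M^3 ≤ M^(20:ℕ) := by
        rw [hpow]
        nlinarith [mul_le_mul_of_nonneg_right h1156
          (show (0:ℝ) ≤ M*M^3 by positivity),
          pow_nonneg (show (0:ℝ) ≤ M by linarith) 3]
      calc F ≤ 11*M^3 := hF11
        _ ≤ M^(20:ℕ) := h20
        _ ≤ M^(20:ℕ) * (A:ℝ) := by nlinarith [pow_pos (lt_of_lt_of_le one_pos hM) 20]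
    · -- m ≥ 2
      have hm1' : 1 ≤ m - 1 := by omega
      have hmin := Nat.find_min hex (show m - 1 < m by omega)
      push_neg at hmin
      have hlow : r/10 < 2*π*|CFAux.ee α (m-1)| := hmin hm1'
      have hmm : m - 1 + 1 = m := by omega
      have hup : |CFAux.ee α (m-1)| * cfDen α m ≤ 1 := by
        have := CFAux.eps_le hα (m-1)
        rwa [hmm] at this
      have hq_pos_m := CFAux.q_pos hα m
      have hqmr : cfDen α m * r ≤ 20*π := by
        nlinarith [abs_nonneg (CFAux.ee α (m-1))]
      have hFqm : F ≤ (8*M+3) * cfDen α m := by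
        have h1 : cfDen α (m+1) ≤ M * cfDen α m := hbdd' m
        have h2 : cfDen α 2 ≤ cfDen α m := CFAux.q_mono_le hα hc
        rw [hFdef]
        nlinarith
      rw [← mul_le_mul_iff_of_pos_right hr]
      have hMA : 289*π*M ≤ M^(20:ℕ)*(A:ℝ)*r := by
        have hId : M^(20:ℕ) = M^8*M^8*M*M^3 := by ring
        have hterm1 : π*(M^8*M^8*M) ≤ (4*M^3*r*(A:ℝ))*(M^8*M^8*M) :=
          mul_le_mul_of_nonneg_right hA_low (by positivity)
        have hterm2 : 1156*(π*M) ≤ (M^8*M^8)*(π*M) :=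
          mul_le_mul_of_nonneg_right h1156 (by positivity)
        rw [hId]
        nlinarith
      have hFr : F * r ≤ (8*M+3) * (20*π) := by
        have := mul_le_mul_of_nonneg_right hFqm hr.le
        nlinarith [mul_le_mul_of_nonneg_left hqmr (by linarith : (0:ℝ) ≤ 8*M+3)]
      calc F * r ≤ (8*M+3)*(20*π) := hFr
        _ ≤ 289*π*M := by nlinarith
        _ ≤ M^(20:ℕ)*(A:ℝ)*r := hMA
  have hBA : (B:ℝ) ≤ M^(20:ℕ) * (A:ℝ) := le_trans hB_le hcomp
  have hBpos : 0 < B := lt_of_lt_of_le hA1 hAB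
  have hBpos' : (0:ℝ) < (B:ℝ) := by exact_mod_cast hBpos
  have hMpow : (0:ℝ) < M^(20:ℕ) := pow_pos (lt_of_lt_of_le one_pos hM) 20
  constructor
  · rw [inv_eq_one_div, div_le_div_iff₀ hMpow hBpos']
    linarith
  · rw [div_le_one hBpos']
    exact_mod_cast hAB

end
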